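/- Let Λ = Λ₀ ⊕ Λ₁ ⊕ Λ₂ ⊕ ⋯ be a ℤ₊-graded commutative ring and let F be a functor from commutative rings to abelian groups such that the two natural maps Λ → Λ[Z] (inclusion of constants) and evaluation Λ[Z] → Λ at Z = 1 and Z = 0 behave functorially. If the natural map F(Λ) → F(Λ[Z]) induced by the inclusion is an isomorphism, then the map F(Λ₀) → F(Λ) induced by the inclusion Λ₀ ⊆ Λ is an isomorphism (Swan–Weibel homotopy trick). -/

import Mathlib

open CategoryTheory Polynomial DirectSum
open scoped DirectSum
noncomputable section

variable {A : Type} [CommRing A] (𝒜 : ℕ → Submodule ℤ A) [GradedRing 𝒜]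

/-- The additive map `𝒜 i →+ A[X]`, `x ↦ C x * X ^ i`. -/
def swGF (i : ℕ) : 𝒜 i →+ A[X] where
  toFun x := Polynomial.C (x : A) * X ^ i
  map_zero' := by simp
  map_add' x y := by push_cast; rw [map_add, add_mul]

/-- The ring hom `⨁ 𝒜 i →+* A[X]` sending a degree-`i` element `x` to `C x * X ^ i`. -/
def swGPsi : (⨁ i, 𝒜 i) →+* A[X] :=
  DirectSum.toSemiring (swGF 𝒜)
    (by simp [swGF, SetLike.coe_gOne])
    (by
      intro i j x y
      simp only [swGF, AddMonoidHom.coe_mk, ZeroHom.coe_mk, SetLike.coe_gMul, map_mul]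
      ring)

/-- The Swan–Weibel ring hom `A →+* A[X]` sending `λ ∈ 𝒜 i` to `λ X ^ i`. -/
def swGrading : A →+* A[X] :=
  (swGPsi 𝒜).comp (DirectSum.decomposeRingEquiv 𝒜 : A ≃+* ⨁ i, 𝒜 i)

lemma swGrading_eval_one : (Polynomial.evalRingHom (1 : A)).comp (swGrading 𝒜) =
    RingHom.id A := by
  have h : (Polynomial.evalRingHom (1 : A)).comp (swGPsi 𝒜) =
      ((DirectSum.decomposeRingEquiv 𝒜).symm : (⨁ i, 𝒜 i) ≃+* A) := by
    refine DirectSum.ringHom_ext fun i x => ?_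
    simp [swGPsi, swGF, DirectSum.toSemiring_of, DirectSum.decomposeRingEquiv]
    exact (DirectSum.decompose_symm_of (ℳ := 𝒜) x).symm
  ext a
  have := congrArg (fun g => g ((DirectSum.decomposeRingEquiv 𝒜) a)) h
  simpa [swGrading] using this

lemma swGrading_eval_zero : (Polynomial.evalRingHom (0 : A)).comp (swGrading 𝒜) =
    GradedRing.projZeroRingHom 𝒜 := by
  have h : (Polynomial.evalRingHom (0 : A)).comp (swGPsi 𝒜) =
      (GradedRing.projZeroRingHom 𝒜).comp
        ((DirectSum.decomposeRingEquiv 𝒜).symm : (⨁ i, 𝒜 i) ≃+* A) := by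
    refine DirectSum.ringHom_ext fun i x => ?_
    simp only [RingHom.comp_apply, swGPsi, DirectSum.toSemiring_of, swGF,
      AddMonoidHom.coe_mk, ZeroHom.coe_mk, map_mul, eval_C, RingEquiv.coe_ringHom_trans]
    rcases eq_or_ne i 0 with rfl | hi
    · simp [GradedRing.projZeroRingHom, DirectSum.decomposeRingEquiv,
        DirectSum.decompose_coe, DirectSum.of_eq_same]
      erw [DirectSum.decompose_symm_of, DirectSum.decompose_coe, DirectSum.of_eq_same]
    · simp [GradedRing.projZeroRingHom, DirectSum.decomposeRingEquiv,
        DirectSum.decompose_coe, DirectSum.of_eq_of_ne _ _ _ hi,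
        zero_pow hi]
      erw [DirectSum.decompose_symm_of, DirectSum.decompose_coe]
      simp [DirectSum.of_eq_of_ne _ _ _ hi.symm]
  ext a
  have := congrArg (fun g => g ((DirectSum.decomposeRingEquiv 𝒜) a)) h
  simpa [swGrading] using this

/-- Swan–Weibel homotopy trick: for a ℤ₊-graded commutative ring
`Λ = Λ₀ ⊕ Λ₁ ⊕ ⋯` and a functor `F` from commutative rings to abelian groups, if the
map `F(Λ) → F(Λ[Z])` induced by the inclusion of constants is an isomorphism, then
`F(Λ₀) → F(Λ)` induced by `Λ₀ ⊆ Λ` is an isomorphism. -/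
theorem statement15 (A : Type) [CommRing A] (𝒜 : ℕ → Submodule ℤ A) [GradedRing 𝒜]
    (F : CommRingCat.{0} ⥤ AddCommGrpCat.{0})
    (hiso : IsIso (F.map (CommRingCat.ofHom (Polynomial.C : A →+* A[X])))) :
    IsIso (F.map (CommRingCat.ofHom (SetLike.GradeZero.subring 𝒜).subtype)) := by
  -- morphisms in CommRingCat
  set c : CommRingCat.of A ⟶ CommRingCat.of A[X] :=
    CommRingCat.ofHom (Polynomial.C : A →+* A[X]) with hc
  set e1 : CommRingCat.of A[X] ⟶ CommRingCat.of A :=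
    CommRingCat.ofHom (Polynomial.evalRingHom (1 : A)) with he1
  set e0 : CommRingCat.of A[X] ⟶ CommRingCat.of A :=
    CommRingCat.ofHom (Polynomial.evalRingHom (0 : A)) with he0
  set φ : CommRingCat.of A ⟶ CommRingCat.of A[X] :=
    CommRingCat.ofHom (swGrading 𝒜) with hφ
  set ι : CommRingCat.of ↥(SetLike.GradeZero.subring 𝒜) ⟶ CommRingCat.of A :=
    CommRingCat.ofHom (SetLike.GradeZero.subring 𝒜).subtype with hι
  set π : CommRingCat.of A ⟶ CommRingCat.of ↥(SetLike.GradeZero.subring 𝒜) :=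
    CommRingCat.ofHom (GradedRing.projZeroRingHom' 𝒜) with hπ
  have hce1 : c ≫ e1 = 𝟙 _ := by
    ext a
    simp [hc, he1]
  have hce0 : c ≫ e0 = 𝟙 _ := by
    ext a
    simp [hc, he0]
  have hφe1 : φ ≫ e1 = 𝟙 _ := by
    ext a
    exact DFunLike.congr_fun (swGrading_eval_one 𝒜) a
  have hφe0 : φ ≫ e0 = π ≫ ι := by
    ext a
    exact DFunLike.congr_fun (swGrading_eval_zero 𝒜) a
  have hιπ : ι ≫ π = 𝟙 _ := by
    ext a
    exact congrArg Subtype.val (GradedRing.projZeroRingHom'_apply_coe 𝒜 a)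
  -- Now the functorial argument
  have hFe1 : F.map c ≫ F.map e1 = 𝟙 _ := by rw [← F.map_comp, hce1, F.map_id]
  have hFe0 : F.map c ≫ F.map e0 = 𝟙 _ := by rw [← F.map_comp, hce0, F.map_id]
  have heq : F.map e1 = F.map e0 := by
    calc F.map e1 = inv (F.map c) ≫ (F.map c ≫ F.map e1) := by
          rw [← Category.assoc, IsIso.inv_hom_id, Category.id_comp]
      _ = inv (F.map c) ≫ (F.map c ≫ F.map e0) := by rw [hFe1, hFe0]
      _ = F.map e0 := by rw [← Category.assoc, IsIso.inv_hom_id, Category.id_comp]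
  have h1 : F.map π ≫ F.map ι = 𝟙 _ := by
    rw [← F.map_comp, ← hφe0, F.map_comp, ← heq, ← F.map_comp, hφe1, F.map_id]
  have h2 : F.map ι ≫ F.map π = 𝟙 _ := by rw [← F.map_comp, hιπ, F.map_id]
  exact ⟨F.map π, h2, h1⟩
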